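/- arXiv:2501.03086 — 3 statements merged into one kernel-verified Lean document; each statement's English description precedes it below -/
import Mathlib

section
/- Let K be an m-simplex in ℝ^d with full-rank edge matrix E_K and minimum height a_K (the minimum over j of the distance from vertex x_j to the opposite facet). Then 1/(m²·a_K²) ≤ ‖(E_K^T E_K)^{-1}‖ ≤ m/a_K², where ‖·‖ is the spectral norm. -/
open Matrix RealInnerProductSpace

lemma trace_eq_sum_eigenvalues' {n : Type*} [Fintype n] [DecidableEq n]
    {A : Matrix n n ℝ} (hA : A.IsHermitian) :
    A.trace = ∑ i, hA.eigenvalues i := by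
  simpa using hA.trace_eq_sum_eigenvalues

lemma inner_eq_of_mem_affineSpan' {d n : ℕ} {x : Fin n → EuclideanSpace ℝ (Fin d)}
    {i : Fin n} {v : EuclideanSpace ℝ (Fin d)} {c : ℝ}
    (h : ∀ k, k ≠ i → ⟪v, x k⟫ = c) {y : EuclideanSpace ℝ (Fin d)}
    (hy : y ∈ affineSpan ℝ (x '' ({i}ᶜ : Set (Fin n)))) : ⟪v, y⟫ = c := by
  rw [Set.image_eq_range] at hy
  obtain ⟨w, hw, rfl⟩ := eq_affineCombination_of_mem_affineSpan_of_fintype hy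
  rw [Finset.affineCombination_eq_linear_combination _ _ _ hw, inner_sum]
  have h1 : ∀ k : ({i}ᶜ : Set (Fin n)), ⟪v, (w k) • x ↑k⟫ = w k * c := by
    intro k
    rw [real_inner_smul_right, h _ k.2]
  rw [Finset.sum_congr rfl (fun k _ => h1 k), ← Finset.sum_mul, hw, one_mul]

lemma comb_mem_affineSpan' {d n : ℕ} (x : Fin n → EuclideanSpace ℝ (Fin d))
    (i : Fin n) (W : Fin n → ℝ) (hWi : W i = 0) (hW : ∑ k, W k = 1) :
    (∑ k, W k • x k) ∈ affineSpan ℝ (x '' ({i}ᶜ : Set (Fin n))) := by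
  rw [Set.image_eq_range]
  have hmem : ∀ k : Fin n, k ∈ ({i}ᶜ : Finset (Fin n)) ↔ k ∈ ({i}ᶜ : Set (Fin n)) := by
    intro k; simp
  have hsub : ∀ (f : Fin n → EuclideanSpace ℝ (Fin d)),
      (∑ k : ({i}ᶜ : Set (Fin n)), f ↑k) = ∑ k ∈ ({i}ᶜ : Finset (Fin n)), f k :=
    fun f => (Finset.sum_subtype _ hmem f).symm
  have hsubr : ∀ (f : Fin n → ℝ),
      (∑ k : ({i}ᶜ : Set (Fin n)), f ↑k) = ∑ k ∈ ({i}ᶜ : Finset (Fin n)), f k :=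
    fun f => (Finset.sum_subtype _ hmem f).symm
  have hcompl : ∀ {α : Type} [AddCommMonoid α] (f : Fin n → α), f i = 0 →
      ∑ k ∈ ({i}ᶜ : Finset (Fin n)), f k = ∑ k, f k := by
    intro α _ f hf
    have := Finset.sum_compl_add_sum ({i} : Finset (Fin n)) f
    rw [Finset.sum_singleton, hf, add_zero] at this
    exact this
  have hsum1 : ∑ k : ({i}ᶜ : Set (Fin n)), W ↑k = 1 := by
    rw [hsubr, hcompl _ hWi, hW]
  have := affineCombination_mem_affineSpan (k := ℝ) (s := Finset.univ)
    (w := fun k : ({i}ᶜ : Set (Fin n)) => W ↑k) (by simpa using hsum1)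
    (fun k : ({i}ᶜ : Set (Fin n)) => x ↑k)
  rw [Finset.affineCombination_eq_linear_combination _ _ _ (by simpa using hsum1)] at this
  have heq : (∑ k : ({i}ᶜ : Set (Fin n)), W ↑k • x ↑k) = ∑ k, W k • x k := by
    rw [hsub (fun k => W k • x k), hcompl _ (by rw [hWi, zero_smul])]
  rwa [heq] at this

lemma le_infDist_aux' {d n : ℕ} {x : Fin n → EuclideanSpace ℝ (Fin d)}
    {i : Fin n} {v : EuclideanSpace ℝ (Fin d)} {c : ℝ} (hv : v ≠ 0)
    (h : ∀ k, k ≠ i → ⟪v, x k⟫ = c) (hi : ⟪v, x i⟫ = c + 1)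
    (hne : ∃ k, k ≠ i) :
    ‖v‖⁻¹ ≤ Metric.infDist (x i) (affineSpan ℝ (x '' ({i}ᶜ : Set (Fin n)))) := by
  obtain ⟨k0, hk0⟩ := hne
  have hxk0 : x k0 ∈ (affineSpan ℝ (x '' ({i}ᶜ : Set (Fin n))) : Set _) :=
    subset_affineSpan _ _ (Set.mem_image_of_mem _ (by simpa using hk0))
  rw [Metric.infDist_eq_iInf]
  have hnonempty : Nonempty ↥(affineSpan ℝ (x '' ({i}ᶜ : Set (Fin n))) : Set _) := ⟨⟨x k0, hxk0⟩⟩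
  apply le_ciInf
  rintro ⟨y, hy⟩
  have h1 : ⟪v, x i - y⟫ = 1 := by
    rw [inner_sub_right, hi, inner_eq_of_mem_affineSpan' h hy]; ring
  have h2 : (1:ℝ) ≤ ‖v‖ * dist (x i) y := by
    rw [dist_eq_norm]
    calc (1:ℝ) = ⟪v, x i - y⟫ := h1.symm
    _ ≤ ‖v‖ * ‖x i - y‖ := real_inner_le_norm _ _
  have hvpos : 0 < ‖v‖ := norm_pos_iff.mpr hv
  have hd : (0:ℝ) ≤ dist (x i) y := dist_nonneg
  rw [inv_le_iff_one_le_mul₀ hvpos] at *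
  nlinarith

/-- For an m-simplex in ℝ^d with full-column-rank edge matrix `E` and minimum
height `a_K`, `1/(m²·a_K²) ≤ ‖(EᵀE)⁻¹‖ ≤ m/a_K²` (spectral norm = largest
eigenvalue). -/
theorem min_height_bounds_spectral_norm_inv_gram
    (d m : ℕ) (hm : 0 < m) (hmd : m ≤ d)
    (x : Fin (m + 1) → EuclideanSpace ℝ (Fin d))
    (hx : AffineIndependent ℝ x)
    (E : Matrix (Fin d) (Fin m) ℝ)
    (hE : ∀ (i : Fin d) (j : Fin m), E i j = (x j.succ - x 0) i)
    (hrank : E.rank = m)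
    (a : Fin (m + 1) → ℝ)
    (ha : ∀ j, a j = Metric.infDist (x j)
      (affineSpan ℝ (x '' ({j}ᶜ : Set (Fin (m + 1)))) : Set (EuclideanSpace ℝ (Fin d))))
    (aK : ℝ) (haK : aK = Finset.univ.inf' Finset.univ_nonempty a) :
    1 / ((m : ℝ) ^ 2 * aK ^ 2)
        ≤ Finset.univ.sup' (Finset.univ_nonempty_iff.mpr (Fin.pos_iff_nonempty.mp hm))
            ((Matrix.isHermitian_conjTranspose_mul_self E :
              (Eᵀ * E).IsHermitian).inv : ((Eᵀ * E)⁻¹).IsHermitian).eigenvalues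
      ∧ Finset.univ.sup' (Finset.univ_nonempty_iff.mpr (Fin.pos_iff_nonempty.mp hm))
            ((Matrix.isHermitian_conjTranspose_mul_self E :
              (Eᵀ * E).IsHermitian).inv : ((Eᵀ * E)⁻¹).IsHermitian).eigenvalues
          ≤ m / aK ^ 2 := by
  classical
  -- Positive definiteness of the Gram matrix
  have hMpd : (Eᵀ * E).PosDef := by
    have hinj : Function.Injective E.mulVecLin := by
      rw [← LinearMap.ker_eq_bot]
      have h1 := LinearMap.finrank_range_add_finrank_ker E.mulVecLin
      rw [Module.finrank_fin_fun] at h1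
      have h2 : Module.finrank ℝ (LinearMap.range E.mulVecLin) = m := hrank
      rw [h2] at h1
      have h3 : Module.finrank ℝ (LinearMap.ker E.mulVecLin) = 0 := by omega
      exact Submodule.finrank_eq_zero.mp h3
    refine Matrix.posDef_iff_dotProduct_mulVec.mpr ⟨Matrix.isHermitian_conjTranspose_mul_self E, fun v hv => ?_⟩
    have hEv : E *ᵥ v ≠ 0 := by
      intro h0
      exact hv (hinj (by simpa [Matrix.mulVecLin_apply] using h0))
    have heq : star v ⬝ᵥ ((Eᵀ * E) *ᵥ v) = (E *ᵥ v) ⬝ᵥ (E *ᵥ v) := by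
      rw [← Matrix.mulVec_mulVec, Matrix.dotProduct_mulVec, Matrix.vecMul_transpose]
      simp
    rw [heq]
    have hne : ∃ i, (E *ᵥ v) i ≠ 0 := by
      by_contra hall
      push_neg at hall
      exact hEv (funext hall)
    obtain ⟨i, hi⟩ := hne
    have : (0:ℝ) < ∑ i, (E *ᵥ v) i * (E *ᵥ v) i :=
      Finset.sum_pos' (fun i _ => mul_self_nonneg _)
        ⟨i, Finset.mem_univ i, mul_self_pos.mpr hi⟩
    simpa [dotProduct] using this
  have hdet : IsUnit (Eᵀ * E).det := (Matrix.isUnit_iff_isUnit_det _).mp hMpd.isUnit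
  have hMN : (Eᵀ * E) * (Eᵀ * E)⁻¹ = 1 := Matrix.mul_nonsing_inv _ hdet
  have hNpd : ((Eᵀ * E)⁻¹).PosDef := hMpd.inv
  have hNherm : ((Eᵀ * E)⁻¹).IsHermitian := hNpd.1
  have hNsymm : ((Eᵀ * E)⁻¹)ᵀ = (Eᵀ * E)⁻¹ := hNherm
  -- the matrix Q = E * (EᵀE)⁻¹ whose columns are the q_j
  have hQ1 : Eᵀ * (E * (Eᵀ * E)⁻¹) = 1 := by rw [← Matrix.mul_assoc]; exact hMN
  have hQ2 : (E * (Eᵀ * E)⁻¹)ᵀ * (E * (Eᵀ * E)⁻¹) = (Eᵀ * E)⁻¹ := by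
    rw [Matrix.transpose_mul, hNsymm, Matrix.mul_assoc, hQ1, Matrix.mul_one]
  set q : Fin m → EuclideanSpace ℝ (Fin d) :=
    fun j => WithLp.toLp 2 (fun i => (E * (Eᵀ * E)⁻¹) i j) with hqdef
  have hip : ∀ (u w : EuclideanSpace ℝ (Fin d)), ⟪u, w⟫ = ∑ i, u i * w i := by
    intro u w; simp [PiLp.inner_apply, RCLike.inner_apply, mul_comm]
  have hq_edge : ∀ j k : Fin m, ⟪q j, x k.succ - x 0⟫ = if k = j then 1 else 0 := by
    intro j k
    rw [hip]
    have h1 : ∀ i, q j i * (x k.succ - x 0) i = Eᵀ k i * (E * (Eᵀ * E)⁻¹) i j := by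
      intro i
      have : (x k.succ - x 0) i = E i k := (hE i k).symm
      rw [this, hqdef]
      simp [Matrix.transpose_apply, mul_comm]
    rw [Finset.sum_congr rfl (fun i _ => h1 i), ← Matrix.mul_apply, hQ1, Matrix.one_apply]
  have hq_q : ∀ j k : Fin m, ⟪q j, q k⟫ = (Eᵀ * E)⁻¹ j k := by
    intro j k
    rw [hip]
    have h1 : ∀ i, q j i * q k i
        = (E * (Eᵀ * E)⁻¹)ᵀ j i * (E * (Eᵀ * E)⁻¹) i k := by
      intro i; rw [hqdef]; simp [Matrix.transpose_apply]
    rw [Finset.sum_congr rfl (fun i _ => h1 i), ← Matrix.mul_apply, hQ2]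
  have hq_norm : ∀ j, ‖q j‖ ^ 2 = (Eᵀ * E)⁻¹ j j := by
    intro j
    rw [← real_inner_self_eq_norm_sq, hq_q]
  have hq_ne : ∀ j, q j ≠ 0 := by
    intro j h0
    have h1 := hq_edge j j
    rw [h0] at h1
    simp at h1
  have hqx : ∀ (j : Fin m) (k : Fin (m+1)),
      ⟪q j, x k⟫ = ⟪q j, x 0⟫ + (if k = j.succ then 1 else 0) := by
    intro j k
    induction k using Fin.cases with
    | zero => simp [(Fin.succ_ne_zero j).symm]
    | succ l =>
      have h1 := hq_edge j l
      rw [inner_sub_right] at h1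
      have h2 : (if l.succ = j.succ then (1:ℝ) else 0) = (if l = j then 1 else 0) := by
        simp [Fin.succ_inj]
      rw [h2]
      linarith [h1]
  -- existence of an index different from any given one
  have hone : (1 : Fin (m+1)) ≠ 0 := by
    have h1 : ((1 : Fin (m+1)) : ℕ) = 1 := by
      rw [Fin.val_one']; exact Nat.mod_eq_of_lt (by omega)
    intro h
    rw [Fin.ext_iff, h1] at h
    simp at h
  have hexists_ne : ∀ i : Fin (m+1), ∃ k, k ≠ i := by
    intro i
    by_cases h : i = 0
    · exact ⟨1, by rw [h]; exact hone⟩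
    · exact ⟨0, fun h0 => h h0.symm⟩
  -- positivity of the heights
  have ha_pos : ∀ i, 0 < a i := by
    intro i
    rw [ha]
    obtain ⟨k0, hk0⟩ := hexists_ne i
    have hxk0 : x k0 ∈ (affineSpan ℝ (x '' ({i}ᶜ : Set (Fin (m+1)))) : Set _) :=
      subset_affineSpan _ _ (Set.mem_image_of_mem _ (by simpa using hk0))
    have hclosed : IsClosed (affineSpan ℝ (x '' ({i}ᶜ : Set (Fin (m+1)))) : Set (EuclideanSpace ℝ (Fin d))) :=
      (affineSpan ℝ (x '' ({i}ᶜ : Set (Fin (m+1))))).closed_of_finiteDimensional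
    have hnotmem : x i ∉ (affineSpan ℝ (x '' ({i}ᶜ : Set (Fin (m+1)))) : Set _) := by
      have := hx.notMem_affineSpan_diff i Set.univ
      rwa [← Set.compl_eq_univ_diff] at this
    exact (hclosed.notMem_iff_infDist_pos ⟨_, hxk0⟩).mp hnotmem
  have haK_le : ∀ i, aK ≤ a i := by
    intro i
    rw [haK]
    exact Finset.inf'_le _ (Finset.mem_univ i)
  have haK_pos : 0 < aK := by
    obtain ⟨i0, _, hi0⟩ := Finset.exists_mem_eq_inf' (Finset.univ_nonempty) a
    rw [haK, hi0]
    exact ha_pos i0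
  -- lower bounds on heights via q vectors
  have hlow : ∀ j : Fin m, ‖q j‖⁻¹ ≤ a j.succ := by
    intro j
    rw [ha]
    refine le_infDist_aux' (hq_ne j) (c := ⟪q j, x 0⟫) ?_ ?_ (hexists_ne _)
    · intro k hk
      rw [hqx j k, if_neg hk, add_zero]
    · rw [hqx j j.succ, if_pos rfl]
  -- the q₀ vector
  set q0 : EuclideanSpace ℝ (Fin d) := -(∑ j, q j) with hq0def
  have hq0x : ∀ k : Fin m, ⟪q0, x k.succ⟫ = ⟪q0, x 0⟫ - 1 := by
    intro k
    rw [hq0def, inner_neg_left, inner_neg_left, sum_inner, sum_inner]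
    have h1 : ∑ j, ⟪q j, x k.succ⟫ = (∑ j, ⟪q j, x 0⟫) + 1 := by
      rw [Finset.sum_congr rfl (fun j _ => hqx j k.succ)]
      rw [Finset.sum_add_distrib]
      congr 1
      simp [Fin.succ_inj]
    rw [h1]; ring
  have hq0_ne : q0 ≠ 0 := by
    intro h0
    have h1 := hq0x ⟨0, hm⟩
    rw [h0] at h1
    simp at h1
  have hlow0 : ‖q0‖⁻¹ ≤ a 0 := by
    rw [ha]
    refine le_infDist_aux' hq0_ne (c := ⟪q0, x 0⟫ - 1) ?_ ?_ (hexists_ne _)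
    · intro k hk
      induction k using Fin.cases with
      | zero => exact absurd rfl hk
      | succ l => exact hq0x l
    · ring
  -- upper bound on heights via explicit witness point
  have hupp : ∀ j : Fin m, a j.succ ≤ ‖q j‖⁻¹ := by
    intro j
    have hqnorm_ne : ‖q j‖ ≠ 0 := norm_ne_zero_iff.mpr (hq_ne j)
    have ht : (0:ℝ) < (Eᵀ * E)⁻¹ j j := by
      rw [← hq_norm j]
      positivity
    set t : ℝ := (Eᵀ * E)⁻¹ j j with htdef
    set cv : Fin m → ℝ :=
      fun l => (if l = j then (1:ℝ) else 0) - t⁻¹ * (Eᵀ * E)⁻¹ l j with hcvdef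
    set W : Fin (m+1) → ℝ := Fin.cases (1 - ∑ l, cv l) cv with hWdef
    have hcvj : cv j = 0 := by
      have h1 : t⁻¹ * (Eᵀ * E)⁻¹ j j = 1 := inv_mul_cancel₀ ht.ne'
      rw [hcvdef]
      show (if j = j then (1:ℝ) else 0) - t⁻¹ * (Eᵀ * E)⁻¹ j j = 0
      rw [h1, if_pos rfl]
      ring
    have hWj : W j.succ = 0 := by
      rw [hWdef]
      simp only [Fin.cases_succ]
      exact hcvj
    have hW0 : W 0 = 1 - ∑ l, cv l := by rw [hWdef]; simp
    have hWsucc : ∀ l, W l.succ = cv l := by intro l; rw [hWdef]; simp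
    have hWsum : ∑ k, W k = 1 := by
      rw [Fin.sum_univ_succ, hW0, Finset.sum_congr rfl (fun l _ => hWsucc l)]
      ring
    have hmem := comb_mem_affineSpan' x j.succ W hWj hWsum
    have hEcol : ∀ (l : Fin m) (i : Fin d), x l.succ i = x 0 i + E i l := by
      intro l i
      have h1 := hE i l
      have h2 : (x l.succ - x 0) i = x l.succ i - x 0 i := rfl
      rw [h2] at h1
      linarith
    have hwit : ∀ i, (∑ k, W k • x k) i = x j.succ i - t⁻¹ * q j i := by
      intro i
      have hs : (∑ k, W k • x k) i = ∑ k, W k * x k i := by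
        rw [WithLp.ofLp_sum, Finset.sum_apply]
        exact Finset.sum_congr rfl (fun k _ => rfl)
      rw [hs, Fin.sum_univ_succ, hW0]
      have hqji : q j i = ∑ l, E i l * (Eᵀ * E)⁻¹ l j := by
        rw [hqdef]
        exact Matrix.mul_apply
      have hexp : ∀ l : Fin m, cv l * (x 0 i + E i l)
          = cv l * x 0 i + ((if l = j then E i l else 0)
            - t⁻¹ * ((Eᵀ * E)⁻¹ l j * E i l)) := by
        intro l
        rw [hcvdef]
        by_cases h : l = j <;> simp [h] <;> ring
      have hstep1 : ∑ l : Fin m, W l.succ * x l.succ i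
          = ∑ l : Fin m, cv l * (x 0 i + E i l) :=
        Finset.sum_congr rfl (fun l _ => by rw [hWsucc l, hEcol l i])
      have hstep2 : ∑ l : Fin m, cv l * (x 0 i + E i l)
          = (∑ l, cv l) * x 0 i
            + (E i j - t⁻¹ * ∑ l, (Eᵀ * E)⁻¹ l j * E i l) := by
        rw [Finset.sum_congr rfl (fun l _ => hexp l), Finset.sum_add_distrib,
          Finset.sum_sub_distrib, Finset.sum_ite_eq' Finset.univ j (fun l => E i l),
          ← Finset.sum_mul, ← Finset.mul_sum, if_pos (Finset.mem_univ j)]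
      have hcomm : ∑ l, (Eᵀ * E)⁻¹ l j * E i l = ∑ l, E i l * (Eᵀ * E)⁻¹ l j :=
        Finset.sum_congr rfl (fun l _ => mul_comm _ _)
      rw [hstep1, hstep2, hcomm, hqji, hEcol j i]
      ring
    rw [ha]
    have hsubeq : x j.succ - (∑ k, W k • x k) = t⁻¹ • q j := by
      ext i
      have h2 : (x j.succ - (∑ k, W k • x k)) i
          = x j.succ i - (∑ k, W k • x k) i := rfl
      have h3 : (t⁻¹ • q j) i = t⁻¹ * q j i := rfl
      rw [h2, h3, hwit i]
      ring
    have hdist : dist (x j.succ) (∑ k, W k • x k) = ‖q j‖⁻¹ := by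
      rw [dist_eq_norm, hsubeq, norm_smul]
      have h4 : ‖t⁻¹‖ = t⁻¹ := by
        rw [Real.norm_eq_abs, abs_of_pos (by positivity)]
      rw [h4, htdef, ← hq_norm j]
      field_simp
    calc Metric.infDist (x j.succ) (affineSpan ℝ (x '' ({j.succ}ᶜ : Set (Fin (m+1)))) : Set _)
        ≤ dist (x j.succ) (∑ k, W k • x k) := Metric.infDist_le_dist_of_mem hmem
      _ = ‖q j‖⁻¹ := hdist
  -- eigenvalue facts
  have heig := trace_eq_sum_eigenvalues' hNherm
  have heig_nonneg : ∀ i, 0 ≤ hNherm.eigenvalues i := fun i =>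
    hNpd.posSemidef.eigenvalues_nonneg i
  have hsum_eq : ∑ i, hNherm.eigenvalues i = ∑ j, (Eᵀ * E)⁻¹ j j := by
    rw [← heig]
    simp [Matrix.trace, Matrix.diag]
  have hdiag_nonneg : ∀ j : Fin m, 0 ≤ (Eᵀ * E)⁻¹ j j := fun j => by
    rw [← hq_norm j]; positivity
  have hdiag_le : ∀ j : Fin m, (Eᵀ * E)⁻¹ j j ≤ 1 / aK ^ 2 := by
    intro j
    have h1 : aK ≤ ‖q j‖⁻¹ := le_trans (haK_le j.succ) (hupp j)
    have h2 : (0:ℝ) < ‖q j‖ := norm_pos_iff.mpr (hq_ne j)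
    have h3 : aK * ‖q j‖ ≤ 1 := by
      calc aK * ‖q j‖ ≤ ‖q j‖⁻¹ * ‖q j‖ := by nlinarith
      _ = 1 := inv_mul_cancel₀ h2.ne'
    rw [← hq_norm j, le_div_iff₀ (by positivity : (0:ℝ) < aK ^ 2)]
    nlinarith [mul_nonneg (mul_nonneg haK_pos.le h2.le) (sub_nonneg.mpr h3)]
  have hm' : (0:ℝ) < m := by exact_mod_cast hm
  have htr_low : 1 / (m * aK ^ 2) ≤ ∑ j, (Eᵀ * E)⁻¹ j j := by
    obtain ⟨i0, -, hi0⟩ := Finset.exists_mem_eq_inf' (Finset.univ_nonempty) a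
    have haKi0 : aK = a i0 := by rw [haK]; exact hi0
    rcases Fin.eq_zero_or_eq_succ i0 with h0 | ⟨j, hj⟩
    · -- minimum attained at vertex 0
      subst h0
      have hq0pos : (0:ℝ) < ‖q0‖ := norm_pos_iff.mpr hq0_ne
      have h1 : 1 ≤ aK * ‖q0‖ := by
        have h1a : ‖q0‖⁻¹ ≤ aK := by rw [haKi0]; exact hlow0
        calc (1:ℝ) = ‖q0‖⁻¹ * ‖q0‖ := (inv_mul_cancel₀ hq0pos.ne').symm
        _ ≤ aK * ‖q0‖ := mul_le_mul_of_nonneg_right h1a hq0pos.le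
      have h2 : ‖q0‖ ≤ ∑ j, ‖q j‖ := by
        rw [hq0def, norm_neg]
        exact norm_sum_le _ _
      have h3 : (∑ j, ‖q j‖) ^ 2 ≤ m * ∑ j, ‖q j‖ ^ 2 := by
        have hcs := sq_sum_le_card_mul_sum_sq (s := (Finset.univ : Finset (Fin m)))
          (f := fun j : Fin m => ‖q j‖)
        simpa using hcs
      have h4 : ∑ j, ‖q j‖ ^ 2 = ∑ j, (Eᵀ * E)⁻¹ j j :=
        Finset.sum_congr rfl (fun j _ => hq_norm j)
      have h5 : 1 ≤ (aK * ‖q0‖) ^ 2 := one_le_pow₀ h1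
      have h6 : ‖q0‖ ^ 2 ≤ (∑ j, ‖q j‖) ^ 2 := pow_le_pow_left₀ hq0pos.le h2 2
      rw [div_le_iff₀ (by positivity : (0:ℝ) < m * aK ^ 2), ← h4]
      calc (1:ℝ) ≤ (aK * ‖q0‖) ^ 2 := h5
      _ = aK ^ 2 * ‖q0‖ ^ 2 := by ring
      _ ≤ aK ^ 2 * (∑ j, ‖q j‖) ^ 2 := mul_le_mul_of_nonneg_left h6 (sq_nonneg aK)
      _ ≤ aK ^ 2 * (m * ∑ j, ‖q j‖ ^ 2) := mul_le_mul_of_nonneg_left h3 (sq_nonneg aK)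
      _ = (∑ j, ‖q j‖ ^ 2) * (m * aK ^ 2) := by ring
    · -- minimum attained at a vertex j.succ
      subst hj
      have hqpos : (0:ℝ) < ‖q j‖ := norm_pos_iff.mpr (hq_ne j)
      have h1 : 1 ≤ aK * ‖q j‖ := by
        have h1a : ‖q j‖⁻¹ ≤ aK := by rw [haKi0]; exact hlow j
        calc (1:ℝ) = ‖q j‖⁻¹ * ‖q j‖ := (inv_mul_cancel₀ hqpos.ne').symm
        _ ≤ aK * ‖q j‖ := mul_le_mul_of_nonneg_right h1a hqpos.le
      have h2 : 1 / aK ^ 2 ≤ (Eᵀ * E)⁻¹ j j := by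
        rw [← hq_norm j, div_le_iff₀ (by positivity : (0:ℝ) < aK ^ 2)]
        calc (1:ℝ) ≤ (aK * ‖q j‖) ^ 2 := one_le_pow₀ h1
        _ = ‖q j‖ ^ 2 * aK ^ 2 := by ring
      have h3 : (Eᵀ * E)⁻¹ j j ≤ ∑ l, (Eᵀ * E)⁻¹ l l :=
        Finset.single_le_sum (fun l _ => hdiag_nonneg l) (Finset.mem_univ j)
      have h4 : 1 / (m * aK ^ 2) ≤ 1 / aK ^ 2 := by
        have hm1 : (1:ℝ) ≤ m := by exact_mod_cast hm
        have haK2 : (0:ℝ) < aK ^ 2 := by positivity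
        rw [div_le_div_iff₀ (by positivity) haK2]
        calc (1:ℝ) * aK ^ 2 = aK ^ 2 := by ring
        _ ≤ m * aK ^ 2 := by
          have := mul_le_mul_of_nonneg_right hm1 haK2.le
          calc aK ^ 2 = 1 * aK ^ 2 := by ring
          _ ≤ m * aK ^ 2 := this
        _ = 1 * (m * aK ^ 2) := by ring
      exact le_trans h4 (le_trans h2 h3)
  -- final assembly
  have key : ∀ (H : (Finset.univ : Finset (Fin m)).Nonempty),
      1 / ((m:ℝ) ^ 2 * aK ^ 2) ≤ Finset.univ.sup' H hNherm.eigenvalues ∧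
      Finset.univ.sup' H hNherm.eigenvalues ≤ m / aK ^ 2 := by
    intro H
    have hL_le_sum : Finset.univ.sup' H hNherm.eigenvalues ≤ ∑ i, hNherm.eigenvalues i := by
      obtain ⟨i0, -, hLi⟩ := Finset.exists_mem_eq_sup' H hNherm.eigenvalues
      rw [hLi]
      exact Finset.single_le_sum (fun i _ => heig_nonneg i) (Finset.mem_univ i0)
    have hsum_le_mL : ∑ i, hNherm.eigenvalues i
        ≤ m * Finset.univ.sup' H hNherm.eigenvalues := by
      calc ∑ i, hNherm.eigenvalues i
          ≤ ∑ _i : Fin m, Finset.univ.sup' H hNherm.eigenvalues :=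
        Finset.sum_le_sum (fun i _ => Finset.le_sup' _ (Finset.mem_univ i))
      _ = m * Finset.univ.sup' H hNherm.eigenvalues := by
        simp [Finset.sum_const, mul_comm]
    constructor
    · have hchain : 1 / (m * aK ^ 2) ≤ m * Finset.univ.sup' H hNherm.eigenvalues := by
        rw [← hsum_eq] at htr_low
        exact le_trans htr_low hsum_le_mL
      rw [div_le_iff₀ (by positivity : (0:ℝ) < m * aK ^ 2)] at hchain
      rw [div_le_iff₀ (by positivity : (0:ℝ) < (m:ℝ) ^ 2 * aK ^ 2)]
      calc (1:ℝ) ≤ (m * Finset.univ.sup' H hNherm.eigenvalues) * (m * aK ^ 2) := hchain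
      _ = Finset.univ.sup' H hNherm.eigenvalues * ((m:ℝ) ^ 2 * aK ^ 2) := by ring
    · calc Finset.univ.sup' H hNherm.eigenvalues
          ≤ ∑ i, hNherm.eigenvalues i := hL_le_sum
      _ = ∑ j, (Eᵀ * E)⁻¹ j j := hsum_eq
      _ ≤ ∑ _j : Fin m, 1 / aK ^ 2 := Finset.sum_le_sum (fun j _ => hdiag_le j)
      _ = m * (1 / aK ^ 2) := by simp [Finset.sum_const, mul_comm]
      _ = m / aK ^ 2 := by ring
  exact key _
end

section
/- Let R ∈ ℝ^{m×m} be invertible with singular values σ_1,...,σ_m, and let a_R denote the minimum height of the m-simplex in ℝ^m spanned by the columns of R (with one vertex at the origin). Then each singular value satisfies σ_i ≥ a_R/√m, and consequently det(R^T R)^{1/2} = ∏ σ_i ≥ a_R^m / m^{m/2}. -/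
open Matrix

private lemma sqrt_prod_aux {ι : Type*} (s : Finset ι) (f : ι → ℝ) (h : ∀ i ∈ s, 0 ≤ f i) :
    Real.sqrt (∏ i ∈ s, f i) = ∏ i ∈ s, Real.sqrt (f i) := by
  induction s using Finset.cons_induction with
  | empty => simp
  | cons a s ha ih =>
    rw [Finset.prod_cons, Finset.prod_cons, Real.sqrt_mul (h a (Finset.mem_cons_self a s)),
      ih (fun i hi => h i (Finset.mem_cons_of_mem hi))]

private lemma pilp_sum_apply {n : Type*} [Fintype n] {ι : Type*} (s : Finset ι)
    (f : ι → EuclideanSpace ℝ n) (i : n) : (∑ k ∈ s, f k) i = ∑ k ∈ s, f k i := by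
  induction s using Finset.cons_induction with
  | empty => rfl
  | cons a s ha ih => rw [Finset.sum_cons, Finset.sum_cons, PiLp.add_apply, ih]

private lemma key_bound
    (m : ℕ) (hm : 0 < m)
    (R : Matrix (Fin m) (Fin m) ℝ)
    (v : Fin (m + 1) → EuclideanSpace ℝ (Fin m))
    (hv0 : v 0 = 0)
    (hvs : ∀ (j : Fin m) (i : Fin m), v j.succ i = R i j)
    (a : Fin (m + 1) → ℝ)
    (ha : ∀ j, a j = Metric.infDist (v j)
      (affineSpan ℝ (v '' ({j}ᶜ : Set (Fin (m + 1)))) : Set (EuclideanSpace ℝ (Fin m))))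
    (aR : ℝ) (haR : aR = Finset.univ.inf' Finset.univ_nonempty a)
    (x : Fin m → ℝ) (hx : ∑ k, x k ^ 2 = 1) :
    aR ≤ Real.sqrt m * Real.sqrt (∑ i, ((R *ᵥ x) i) ^ 2) := by
  have : NeZero m := ⟨hm.ne'⟩
  have hmR : (0 : ℝ) < m := by exact_mod_cast hm
  -- pigeonhole
  obtain ⟨j, hj⟩ : ∃ j, 1 / (m : ℝ) ≤ x j ^ 2 := by
    by_contra h
    push_neg at h
    have := Finset.sum_lt_sum_of_nonempty (Finset.univ_nonempty (α := Fin m))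
      (fun k _ => h k)
    rw [hx, Finset.sum_const, Finset.card_univ, Fintype.card_fin, nsmul_eq_mul,
      mul_one_div, div_self hmR.ne'] at this
    exact lt_irrefl 1 this
  have hxj : x j ≠ 0 := by
    intro h
    rw [h] at hj
    simp at hj
    nlinarith
  set w : EuclideanSpace ℝ (Fin m) := (WithLp.equiv 2 (Fin m → ℝ)).symm (R *ᵥ x) with hw
  set s : EuclideanSpace ℝ (Fin m) := v j.succ - (x j)⁻¹ • w with hs
  have hmem0 : (0 : EuclideanSpace ℝ (Fin m)) ∈ v '' ({j.succ}ᶜ : Set (Fin (m + 1))) :=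
    ⟨0, by simpa using (Fin.succ_ne_zero j).symm, hv0⟩
  have hspan : (affineSpan ℝ (v '' ({j.succ}ᶜ : Set (Fin (m + 1)))) :
        Set (EuclideanSpace ℝ (Fin m)))
      = (Submodule.span ℝ (v '' ({j.succ}ᶜ : Set (Fin (m + 1)))) :
        Set (EuclideanSpace ℝ (Fin m))) := by
    conv_lhs => rw [← Set.insert_eq_self.mpr hmem0]
    rw [affineSpan_insert_zero]
  have hs_eq : s = ∑ k ∈ Finset.univ.erase j, (-(x k / x j)) • v k.succ := by
    refine PiLp.ext fun i => ?_
    rw [pilp_sum_apply]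
    have h1 : ∀ k ∈ Finset.univ.erase j, ((-(x k / x j)) • v k.succ) i
        = -((x j)⁻¹ * (R i k * x k)) := by
      intro k _
      rw [PiLp.smul_apply, hvs, smul_eq_mul, div_eq_mul_inv]
      ring
    rw [Finset.sum_congr rfl h1]
    have h2 : s i = R i j - (x j)⁻¹ * (∑ k, R i k * x k) := by
      simp [hs, hw, PiLp.sub_apply, PiLp.smul_apply, hvs, mulVec, dotProduct]
    rw [h2, ← Finset.add_sum_erase _ (fun k => R i k * x k) (Finset.mem_univ j), mul_add,
      Finset.mul_sum, Finset.sum_neg_distrib]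
    have h3 : (x j)⁻¹ * (R i j * x j) = R i j := by field_simp
    rw [h3]
    ring
  have hsmem : s ∈ (affineSpan ℝ (v '' ({j.succ}ᶜ : Set (Fin (m + 1)))) :
      Set (EuclideanSpace ℝ (Fin m))) := by
    rw [hspan, hs_eq]
    refine Submodule.sum_mem _ fun k hk => Submodule.smul_mem _ _ (Submodule.subset_span ?_)
    exact ⟨k.succ, by simpa [Fin.succ_inj] using Finset.ne_of_mem_erase hk, rfl⟩
  -- distance bound
  have hdist : dist (v j.succ) s = |x j|⁻¹ * ‖w‖ := by
    rw [dist_eq_norm, hs, sub_sub_cancel, norm_smul, Real.norm_eq_abs, abs_inv]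
  have hinf : a j.succ ≤ |x j|⁻¹ * ‖w‖ := by
    rw [ha j.succ, ← hdist]
    exact Metric.infDist_le_dist_of_mem hsmem
  -- |x j|⁻¹ ≤ √m
  have hsq : (Real.sqrt m)⁻¹ ≤ |x j| := by
    have h1 : Real.sqrt (1 / (m : ℝ)) ≤ Real.sqrt (x j ^ 2) := Real.sqrt_le_sqrt hj
    rw [Real.sqrt_sq_eq_abs] at h1
    rw [one_div, Real.sqrt_inv] at h1
    exact h1
  have hsm_pos : 0 < Real.sqrt m := Real.sqrt_pos.mpr hmR
  have habs_inv : |x j|⁻¹ ≤ Real.sqrt m := by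
    have h0 : 0 < |x j| := abs_pos.mpr hxj
    calc |x j|⁻¹ ≤ ((Real.sqrt m)⁻¹)⁻¹ := by
          apply inv_anti₀ (by positivity) hsq
      _ = Real.sqrt m := inv_inv _
  have hwnorm : ‖w‖ = Real.sqrt (∑ i, ((R *ᵥ x) i) ^ 2) := by
    rw [EuclideanSpace.norm_eq]
    congr 1
    refine Finset.sum_congr rfl fun i _ => ?_
    rw [Real.norm_eq_abs, sq_abs]
    rfl
  calc aR ≤ a j.succ := haR ▸ Finset.inf'_le a (Finset.mem_univ j.succ)
    _ ≤ |x j|⁻¹ * ‖w‖ := hinf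
    _ ≤ Real.sqrt m * ‖w‖ := mul_le_mul_of_nonneg_right habs_inv (norm_nonneg w)
    _ = Real.sqrt m * Real.sqrt (∑ i, ((R *ᵥ x) i) ^ 2) := by rw [hwnorm]

/-- For invertible `R ∈ ℝ^{m×m}` with singular values `σ_i` and minimum height
`a_R` of the simplex spanned by `0` and the columns of `R`, each `σ_i ≥ a_R/√m`,
and consequently `det(RᵀR)^{1/2} = ∏σ_i ≥ a_R^m/m^{m/2}`. -/
theorem singular_values_ge_min_height
    (m : ℕ) (hm : 0 < m)
    (R : Matrix (Fin m) (Fin m) ℝ) (hR : IsUnit R.det)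
    (σ : Fin m → ℝ)
    (hσ : ∀ i, σ i = Real.sqrt
      ((by simpa using Matrix.isHermitian_conjTranspose_mul_self R : (Rᵀ * R).IsHermitian).eigenvalues i))
    (v : Fin (m + 1) → EuclideanSpace ℝ (Fin m))
    (hv0 : v 0 = 0)
    (hvs : ∀ (j : Fin m) (i : Fin m), v j.succ i = R i j)
    (a : Fin (m + 1) → ℝ)
    (ha : ∀ j, a j = Metric.infDist (v j)
      (affineSpan ℝ (v '' ({j}ᶜ : Set (Fin (m + 1)))) : Set (EuclideanSpace ℝ (Fin m))))
    (aR : ℝ) (haR : aR = Finset.univ.inf' Finset.univ_nonempty a) :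
    (∀ i, aR / Real.sqrt m ≤ σ i)
      ∧ Real.sqrt (Rᵀ * R).det = ∏ i, σ i
      ∧ aR ^ m / (m : ℝ) ^ ((m : ℝ) / 2) ≤ Real.sqrt (Rᵀ * R).det := by
  have hmR : (0 : ℝ) < m := by exact_mod_cast hm
  have hsm_pos : 0 < Real.sqrt m := Real.sqrt_pos.mpr hmR
  set hH : (Rᵀ * R).IsHermitian := (by simpa using Matrix.isHermitian_conjTranspose_mul_self R) with hHdef
  have hμ_nonneg : ∀ i, 0 ≤ hH.eigenvalues i := fun i =>
    Matrix.eigenvalues_conjTranspose_mul_self_nonneg R i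
  -- each singular value bound
  have hmain : ∀ i, aR / Real.sqrt m ≤ σ i := by
    intro i
    set u := hH.eigenvectorBasis i with hu
    have hnorm : ‖u‖ = 1 := hH.eigenvectorBasis.orthonormal.1 i
    have hsum : ∑ k, (u k) ^ 2 = 1 := by
      have h := EuclideanSpace.norm_eq u
      rw [hnorm] at h
      have h2 := Real.sqrt_eq_one.mp h.symm
      simpa [Real.norm_eq_abs, sq_abs] using h2
    have hdd : (⇑u : Fin m → ℝ) ⬝ᵥ ⇑u = 1 := by
      simpa [dotProduct, pow_two] using hsum
    have hmv : (Rᴴ * R) *ᵥ ⇑u = hH.eigenvalues i • ⇑u := hH.mulVec_eigenvectorBasis i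
    have h2 : ⇑u ⬝ᵥ ((Rᴴ * R) *ᵥ ⇑u) = (R *ᵥ ⇑u) ⬝ᵥ (R *ᵥ ⇑u) := by
      rw [← mulVec_mulVec, dotProduct_mulVec]
      rw [show Rᴴ = Rᵀ from Matrix.conjTranspose_eq_transpose_of_trivial R, vecMul_transpose]
    have hdot : (R *ᵥ ⇑u) ⬝ᵥ (R *ᵥ ⇑u) = hH.eigenvalues i := by
      rw [← h2, hmv, dotProduct_smul, smul_eq_mul, hdd, mul_one]
    have hsum2 : ∑ k, ((R *ᵥ ⇑u) k) ^ 2 = hH.eigenvalues i := by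
      rw [← hdot]
      simp [dotProduct, pow_two]
    have hkey := key_bound m hm R v hv0 hvs a ha aR haR (⇑u) hsum
    rw [hsum2] at hkey
    rw [hσ i]
    rw [div_le_iff₀ hsm_pos, mul_comm]
    exact hkey
  refine ⟨hmain, ?_, ?_⟩
  · -- sqrt det = prod
    have hdet : (Rᵀ * R).det = ∏ i, hH.eigenvalues i := by
      have := hH.det_eq_prod_eigenvalues
      simpa using this
    rw [hdet, sqrt_prod_aux _ _ (fun i _ => hμ_nonneg i)]
    exact Finset.prod_congr rfl fun i _ => (hσ i).symm
  · -- final inequality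
    have hdet : (Rᵀ * R).det = ∏ i, hH.eigenvalues i := by
      have := hH.det_eq_prod_eigenvalues
      simpa using this
    have hsprod : Real.sqrt (Rᵀ * R).det = ∏ i, σ i := by
      rw [hdet, sqrt_prod_aux _ _ (fun i _ => hμ_nonneg i)]
      exact Finset.prod_congr rfl fun i _ => (hσ i).symm
    have haR_nonneg : 0 ≤ aR := by
      rw [haR]
      exact Finset.le_inf' _ _ fun b _ => (ha b) ▸ Metric.infDist_nonneg
    have h0 : 0 ≤ aR / Real.sqrt m := div_nonneg haR_nonneg hsm_pos.le
    have hprod : (aR / Real.sqrt m) ^ m ≤ ∏ i, σ i := by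
      calc (aR / Real.sqrt m) ^ m = ∏ _i : Fin m, (aR / Real.sqrt m) := by
            rw [Finset.prod_const, Finset.card_univ, Fintype.card_fin]
        _ ≤ ∏ i, σ i := Finset.prod_le_prod (fun i _ => h0) (fun i _ => hmain i)
    have hpow : Real.sqrt m ^ m = (m : ℝ) ^ ((m : ℝ) / 2) := by
      rw [Real.sqrt_eq_rpow, ← Real.rpow_natCast ((m : ℝ) ^ ((1 : ℝ) / 2)) m,
        ← Real.rpow_mul hmR.le]
      norm_num
      rw [mul_comm, mul_one_div]
    rw [hsprod]
    calc aR ^ m / (m : ℝ) ^ ((m : ℝ) / 2) = (aR / Real.sqrt m) ^ m := by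
          rw [div_pow, hpow]
      _ ≤ ∏ i, σ i := hprod
end

section
/- Let M be a symmetric positive definite d×d matrix and K an m-simplex in ℝ^d with full-rank edge matrix E_K. Let a_{K,M} be the minimum height of K measured in the metric M (equivalently the minimum height in Euclidean metric of the simplex M^{1/2}K). Then |K|_M ≥ a_{K,M}^m / (m^{m/2}·m!), where |K|_M = (1/m!)·det(E_K^T M E_K)^{1/2}. -/
open Matrix

section

open scoped ComplexOrder

/-- The square root of a positive semidefinite matrix, as defined in Mathlib of December 2024
(removed since then). -/
noncomputable def Matrix.PosSemidef.sqrt {n : Type*} {𝕜 : Type*} [Fintype n] [RCLike 𝕜]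
    [DecidableEq n] {A : Matrix n n 𝕜} (hA : A.PosSemidef) : Matrix n n 𝕜 :=
  hA.1.eigenvectorUnitary.1 * diagonal ((↑) ∘ Real.sqrt ∘ hA.1.eigenvalues) *
    (star hA.1.eigenvectorUnitary : Matrix n n 𝕜)

end

lemma aux_sqrt_isHermitian {d : ℕ} {A : Matrix (Fin d) (Fin d) ℝ} (hA : A.PosSemidef) :
    hA.sqrt.IsHermitian := by
  unfold Matrix.PosSemidef.sqrt
  rw [IsHermitian, conjTranspose_mul, conjTranspose_mul,
    ← star_eq_conjTranspose, star_star, diagonal_conjTranspose, ← star_eq_conjTranspose,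
    Matrix.mul_assoc]
  congr 2

lemma aux_sqrt_mul_self {d : ℕ} {A : Matrix (Fin d) (Fin d) ℝ} (hA : A.PosSemidef) :
    hA.sqrt * hA.sqrt = A := by
  unfold Matrix.PosSemidef.sqrt
  set U := hA.1.eigenvectorUnitary
  have hU : (star U).1 * U.1 = 1 :=
    Unitary.star_mul_self_of_mem U.2
  conv_rhs => rw [hA.1.spectral_theorem]
  rw [Unitary.conjStarAlgAut_apply]
  calc U.1 * diagonal ((↑) ∘ Real.sqrt ∘ hA.1.eigenvalues) * (star U).1 *
        (U.1 * diagonal ((↑) ∘ Real.sqrt ∘ hA.1.eigenvalues) * (star U).1)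
      = U.1 * (diagonal ((↑) ∘ Real.sqrt ∘ hA.1.eigenvalues) * ((star U).1 * U.1) *
          diagonal ((↑) ∘ Real.sqrt ∘ hA.1.eigenvalues)) * (star U).1 := by
        simp only [Matrix.mul_assoc]
    _ = _ := by
        rw [hU, Matrix.mul_one, diagonal_mul_diagonal]
        congr 3
        funext k
        simp [Real.mul_self_sqrt (hA.eigenvalues_nonneg k)]

lemma aux_height {d m : ℕ} (y : Fin (m + 1) → EuclideanSpace ℝ (Fin d))
    (c : Fin m → ℝ) (j₀ : Fin m) (ht : c j₀ ≠ 0) :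
    Metric.infDist (y j₀.succ)
        (affineSpan ℝ (y '' ({j₀.succ}ᶜ : Set (Fin (m + 1)))) :
          Set (EuclideanSpace ℝ (Fin d))) * |c j₀|
      ≤ ‖∑ j, c j • (y j.succ - y 0)‖ := by
  set S := affineSpan ℝ (y '' ({j₀.succ}ᶜ : Set (Fin (m + 1)))) with hS
  set t := c j₀ with htdef
  set w : EuclideanSpace ℝ (Fin d) := ∑ j, c j • (y j.succ - y 0) with hw
  have h0mem : y 0 ∈ (S : Set (EuclideanSpace ℝ (Fin d))) :=
    subset_affineSpan ℝ _ ⟨0, by simp [(Fin.succ_ne_zero j₀).symm], rfl⟩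
  have hp : y j₀.succ - t⁻¹ • w ∈ (S : Set (EuclideanSpace ℝ (Fin d))) := by
    have hsplit : w = t • (y j₀.succ - y 0)
        + ∑ j ∈ Finset.univ.erase j₀, c j • (y j.succ - y 0) :=
      (Finset.add_sum_erase _ _ (Finset.mem_univ j₀)).symm
    have hid : y j₀.succ - t⁻¹ • w
        = (-(t⁻¹) • ∑ j ∈ Finset.univ.erase j₀, c j • (y j.succ - y 0)) +ᵥ y 0 := by
      rw [hsplit]
      show _ = (_ : EuclideanSpace ℝ (Fin d)) + _
      rw [smul_add, smul_smul, inv_mul_cancel₀ ht, one_smul, neg_smul]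
      abel
    rw [hid]
    refine AffineSubspace.vadd_mem_of_mem_direction ?_ h0mem
    rw [hS, direction_affineSpan]
    refine Submodule.smul_mem _ _ (Submodule.sum_mem _ fun j hj => Submodule.smul_mem _ _ ?_)
    have hjne : j.succ ≠ j₀.succ := fun h =>
      (Finset.mem_erase.mp hj).1 (Fin.succ_injective _ h)
    exact vsub_mem_vectorSpan ℝ ⟨j.succ, by simp [hjne], rfl⟩
      ⟨0, by simp [(Fin.succ_ne_zero j₀).symm], rfl⟩
  have hdist : Metric.infDist (y j₀.succ) (S : Set (EuclideanSpace ℝ (Fin d)))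
      ≤ |t|⁻¹ * ‖w‖ := by
    calc Metric.infDist (y j₀.succ) (S : Set (EuclideanSpace ℝ (Fin d)))
        ≤ dist (y j₀.succ) (y j₀.succ - t⁻¹ • w) := Metric.infDist_le_dist_of_mem hp
      _ = ‖t⁻¹ • w‖ := by rw [dist_eq_norm]; congr 1; abel
      _ = |t|⁻¹ * ‖w‖ := by rw [norm_smul, Real.norm_eq_abs, abs_inv]
  have htpos : 0 < |t| := abs_pos.mpr ht
  calc Metric.infDist (y j₀.succ) (S : Set (EuclideanSpace ℝ (Fin d))) * |t|
      ≤ (|t|⁻¹ * ‖w‖) * |t| := by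
        exact mul_le_mul_of_nonneg_right hdist htpos.le
    _ = ‖w‖ := by field_simp

/-- For a symmetric positive definite metric `M` and an m-simplex `K ⊂ ℝ^d` with
full-column-rank edge matrix `E`, with `a_{K,M}` the minimum (Euclidean) height of
the simplex `M^{1/2}K`, one has `|K|_M ≥ a_{K,M}^m/(m^{m/2}·m!)`, where
`|K|_M = (1/m!)·det(EᵀME)^{1/2}`. -/
theorem metric_size_ge_min_height_pow
    (d m : ℕ) (hm : 0 < m) (hmd : m ≤ d)
    (M : Matrix (Fin d) (Fin d) ℝ) (hM : M.PosDef)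
    (x : Fin (m + 1) → EuclideanSpace ℝ (Fin d))
    (hx : AffineIndependent ℝ x)
    (E : Matrix (Fin d) (Fin m) ℝ)
    (hE : ∀ (i : Fin d) (j : Fin m), E i j = (x j.succ - x 0) i)
    (hrank : E.rank = m)
    (y : Fin (m + 1) → EuclideanSpace ℝ (Fin d))
    (hy : ∀ (j : Fin (m + 1)) (i : Fin d),
      y j i = hM.posSemidef.sqrt.mulVec (fun k => x j k) i)
    (a : Fin (m + 1) → ℝ)
    (ha : ∀ j, a j = Metric.infDist (y j)
      (affineSpan ℝ (y '' ({j}ᶜ : Set (Fin (m + 1)))) : Set (EuclideanSpace ℝ (Fin d))))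
    (aKM : ℝ) (haKM : aKM = Finset.univ.inf' Finset.univ_nonempty a) :
    aKM ^ m / ((m : ℝ) ^ ((m : ℝ) / 2) * (Nat.factorial m : ℝ))
      ≤ (1 / (Nat.factorial m : ℝ)) * Real.sqrt (Eᵀ * M * E).det := by
  set S := hM.posSemidef.sqrt with hSdef
  set F := S * E with hFdef
  have hSsym : Sᵀ = S := by
    rw [← conjTranspose_eq_transpose_of_trivial]
    exact aux_sqrt_isHermitian hM.posSemidef
  have hSS : S * S = M := aux_sqrt_mul_self hM.posSemidef
  have hEME : Eᵀ * M * E = Fᵀ * F := by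
    rw [hFdef, transpose_mul, hSsym, Matrix.mul_assoc Eᵀ S (S * E), ← Matrix.mul_assoc S S E, hSS, ← Matrix.mul_assoc]
  -- entries of F
  have hF : ∀ (i : Fin d) (j : Fin m), F i j = y j.succ i - y 0 i := by
    intro i j
    have h1 : F i j = ∑ k, S i k * (x j.succ k - x 0 k) := by
      simp [hFdef, Matrix.mul_apply, hE]
    rw [h1, hy, hy]
    simp [Matrix.mulVec, dotProduct, mul_sub, Finset.sum_sub_distrib]
  have haKM0 : 0 ≤ aKM := by
    rw [haKM]
    exact Finset.le_inf' _ _ fun j _ => by rw [ha]; exact Metric.infDist_nonneg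
  -- the quadratic form bound
  have key : ∀ c : Fin m → ℝ,
      aKM ^ 2 / m * (∑ i, c i ^ 2) ≤ ∑ i, (F *ᵥ c) i ^ 2 := by
    intro c
    haveI : Nonempty (Fin m) := ⟨⟨0, hm⟩⟩
    by_cases hc : c = 0
    · simp [hc]
    · obtain ⟨j₀, -, hj₀⟩ := Finset.exists_max_image Finset.univ (fun j => |c j|)
        Finset.univ_nonempty
      have ht : c j₀ ≠ 0 := by
        intro h0
        apply hc
        funext i
        have h := hj₀ i (Finset.mem_univ i)
        rw [h0, abs_zero] at h
        simpa using abs_eq_zero.mp (le_antisymm h (abs_nonneg _))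
      -- identify F *ᵥ c with the vector sum
      set w : EuclideanSpace ℝ (Fin d) := ∑ j, c j • (y j.succ - y 0) with hw
      have hwi : ∀ i, (F *ᵥ c) i = w i := by
        intro i
        have : w i = ∑ j, c j * (y j.succ i - y 0 i) := by
          rw [hw]
          induction (Finset.univ : Finset (Fin m)) using Finset.induction with
          | empty => simp
          | insert _ _ hnot ih =>
            rw [Finset.sum_insert hnot, Finset.sum_insert hnot, ← ih]
            simp [PiLp.add_apply, PiLp.smul_apply, PiLp.sub_apply, smul_eq_mul]
        rw [this]
        simp [Matrix.mulVec, dotProduct, hF, mul_comm]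
      have hsum : ∑ i, (F *ᵥ c) i ^ 2 = ‖w‖ ^ 2 := by
        rw [EuclideanSpace.norm_eq, Real.sq_sqrt (by positivity)]
        exact Finset.sum_congr rfl fun i _ => by rw [hwi i, Real.norm_eq_abs, sq_abs]
      have hheight : aKM * |c j₀| ≤ ‖w‖ := by
        have h1 : aKM ≤ a j₀.succ := haKM ▸ Finset.inf'_le _ (Finset.mem_univ _)
        have h2 := aux_height y c j₀ ht
        rw [← ha] at h2
        exact le_trans (mul_le_mul_of_nonneg_right h1 (abs_nonneg _)) h2
      have hsumc : ∑ i, c i ^ 2 ≤ m * c j₀ ^ 2 := by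
        calc ∑ i, c i ^ 2 ≤ ∑ _i : Fin m, c j₀ ^ 2 := by
              refine Finset.sum_le_sum fun i _ => ?_
              rw [← sq_abs (c i), ← sq_abs (c j₀)]
              exact pow_le_pow_left₀ (abs_nonneg _) (hj₀ i (Finset.mem_univ i)) 2
          _ = m * c j₀ ^ 2 := by simp [mul_comm]
      calc aKM ^ 2 / m * (∑ i, c i ^ 2) ≤ aKM ^ 2 / m * (m * c j₀ ^ 2) := by
            refine mul_le_mul_of_nonneg_left hsumc (by positivity)
        _ = (aKM * |c j₀|) ^ 2 := by
            field_simp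
            rw [sq_abs]
        _ ≤ ‖w‖ ^ 2 := pow_le_pow_left₀ (by positivity) hheight 2
        _ = ∑ i, (F *ᵥ c) i ^ 2 := hsum.symm
  -- eigenvalue analysis of G := Fᵀ * F
  set G := Fᵀ * F with hG
  have hGh : G.IsHermitian := by
    rw [hG, ← conjTranspose_eq_transpose_of_trivial]
    exact isHermitian_conjTranspose_mul_self F
  have heig : ∀ i, aKM ^ 2 / m ≤ hGh.eigenvalues i := by
    intro i
    set v : EuclideanSpace ℝ (Fin m) := hGh.eigenvectorBasis i with hvdef
    have hnorm : ∑ k, v k ^ 2 = 1 := by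
      have h1 : ‖v‖ = 1 := hGh.eigenvectorBasis.orthonormal.1 i
      have h2 : Real.sqrt (∑ k, ‖v k‖ ^ 2) = 1 := by
        rw [← EuclideanSpace.norm_eq]; exact h1
      have h3 : ∑ k, ‖v k‖ ^ 2 = 1 := Real.sqrt_eq_one.mp h2
      simpa [Real.norm_eq_abs, sq_abs] using h3
    have hlam : hGh.eigenvalues i = ∑ k, (F *ᵥ ⇑v) k ^ 2 := by
      rw [hGh.eigenvalues_eq i]
      show (⇑v) ⬝ᵥ (G *ᵥ ⇑v) = ∑ k, (F *ᵥ ⇑v) k ^ 2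
      rw [hG, ← Matrix.mulVec_mulVec, dotProduct_mulVec, Matrix.vecMul_transpose]
      simp [dotProduct, pow_two]
    calc aKM ^ 2 / m = aKM ^ 2 / m * ∑ k, v k ^ 2 := by rw [hnorm, mul_one]
      _ ≤ ∑ k, (F *ᵥ ⇑v) k ^ 2 := key ⇑v
      _ = hGh.eigenvalues i := hlam.symm
  have hdet : (aKM ^ 2 / m) ^ m ≤ G.det := by
    rw [hGh.det_eq_prod_eigenvalues]
    push_cast
    calc (aKM ^ 2 / m) ^ m = ∏ _i : Fin m, (aKM ^ 2 / m) := by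
          rw [Finset.prod_const, Finset.card_univ, Fintype.card_fin]
      _ ≤ ∏ i, hGh.eigenvalues i :=
        Finset.prod_le_prod (fun _ _ => by positivity) (fun i _ => heig i)
  have hm' : (0:ℝ) < m := Nat.cast_pos.mpr hm
  have hsqrtdet : aKM ^ m / (m:ℝ) ^ ((m:ℝ)/2) ≤ Real.sqrt G.det := by
    have h1 : Real.sqrt ((aKM ^ 2 / m) ^ m) ≤ Real.sqrt G.det := Real.sqrt_le_sqrt hdet
    have h2 : Real.sqrt ((aKM ^ 2 / m) ^ m) = aKM ^ m / (m:ℝ) ^ ((m:ℝ)/2) := by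
      rw [div_pow, show (aKM ^ 2) ^ m = (aKM ^ m) ^ 2 by rw [← pow_mul, mul_comm, pow_mul],
        Real.sqrt_div (by positivity) _, Real.sqrt_sq (by positivity)]
      congr 1
      rw [Real.sqrt_eq_rpow, ← Real.rpow_natCast ((m:ℝ)) m, ← Real.rpow_mul hm'.le,
        mul_one_div]
    rw [← h2]; exact h1
  rw [hEME, ← div_div, one_div, ← div_eq_inv_mul]
  have hQ : (0:ℝ) < (Nat.factorial m : ℝ) := by
    exact_mod_cast Nat.cast_pos.mpr (Nat.factorial_pos m)
  gcongr
end
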